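/- An automorphism of a connected 3-regular ribbon graph (a 3-skeleton) arising from an admissible tree (a pseudo-tree) has order at most 3; i.e., |Aut(Sk_Ξ)| ≤ 3 for every pseudo-tree Sk_Ξ. Moreover, Aut(Sk_Ξ) acts freely on the set of edge ends of Sk_Ξ. -/

import Mathlib

open Equiv Equiv.Perm

noncomputable section
open scoped Classical

namespace PTaux

variable {X : Type*}

/-- The setoid of `SameCycle`. -/
def scSetoid (σ : Perm X) : Setoid X :=
  ⟨σ.SameCycle, ⟨SameCycle.refl σ, SameCycle.symm, SameCycle.trans⟩⟩

lemma scSetoid_rel (σ : Perm X) (x y : X) : (scSetoid σ).r x y ↔ σ.SameCycle x y := Iff.rfl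

/-- number of cycles (incl. fixed points) -/
def cyc [Fintype X] (σ : Perm X) : ℕ := Nat.card (Quotient (scSetoid σ))

lemma pow_fix (u : Perm X) {x : X} (h : u x = x) : ∀ n : ℕ, (u ^ n) x = x := by
  intro n; induction n with
  | zero => simp
  | succ n ih => rw [pow_succ', Perm.mul_apply, ih]; exact h

lemma zpow_fix (u : Perm X) {x : X} (h : u x = x) : ∀ i : ℤ, (u ^ i) x = x := by
  intro i
  rcases i with n | n
  · simpa using pow_fix u h n
  · have h1 : (u ^ (n + 1) : Perm X) x = x := pow_fix u h (n + 1)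
    rw [Int.negSucc_eq, zpow_neg, ← zpow_natCast] at *
    conv_lhs => rw [← h1]
    simp

lemma zpow_mod_point (u : Perm X) (x : X) (p : ℕ) (hp : 0 < p) (hper : (u ^ p) x = x)
    (i : ℤ) : ∃ r : ℕ, r < p ∧ (u ^ i) x = (u ^ r) x := by
  have hppos : (0:ℤ) < p := by exact_mod_cast hp
  have h0 : 0 ≤ i % p := Int.emod_nonneg i (by omega)
  have h1 : i % p < p := Int.emod_lt_of_pos i hppos
  refine ⟨(i % p).toNat, by omega, ?_⟩
  have hdecomp : i = (i % p) + (p : ℤ) * (i / p) := by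
    rw [Int.add_comm, Int.mul_ediv_add_emod i p]
  have hfix : (u ^ ((p : ℤ) * (i / p))) x = x := by
    rw [zpow_mul, zpow_natCast]
    exact zpow_fix _ hper _
  calc (u ^ i) x = (u ^ (i % p) * u ^ ((p:ℤ) * (i / p))) x := by
        rw [← zpow_add, ← hdecomp]
      _ = (u ^ (i % p)) x := by rw [Perm.mul_apply, hfix]
      _ = (u ^ (i % p).toNat) x := by
        congr 1
        rw [← zpow_natCast]
        congr 1
        omega

/-- SameCycle via natural powers. -/
lemma sameCycle_iff_nat [Finite X] (u : Perm X) (x y : X) :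
    u.SameCycle x y ↔ ∃ n : ℕ, (u ^ n) x = y := by
  constructor
  · rintro h
    obtain ⟨i, hi, h⟩ := h.exists_pow_eq'
    exact ⟨i, h⟩
  · rintro ⟨n, h⟩
    exact ⟨n, by simpa using h⟩
section swaplemmas
variable [Fintype X] (σ : Perm X) (a b : X)

local notation "τ" => Equiv.swap a b

lemma swap_mul_apply (x : X) : (τ * σ) x = τ (σ x) := rfl

/-- iterates agree as long as we avoid a,b -/
lemma iter_agree (s : X) :
    ∀ i : ℕ, (∀ j, 1 ≤ j → j ≤ i → (σ ^ j) s ≠ a ∧ (σ ^ j) s ≠ b) →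
      ((τ * σ) ^ i) s = (σ ^ i) s := by
  intro i
  induction i with
  | zero => intro _; simp
  | succ n ih =>
    intro hyp
    have h1 : ((τ * σ) ^ (n+1)) s = (τ * σ) (((τ * σ) ^ n) s) := by
      rw [pow_succ', Perm.mul_apply]
    have h2 : (σ ^ (n+1)) s = σ ((σ ^ n) s) := by
      rw [pow_succ', Perm.mul_apply]
    rw [h1, ih (fun j hj1 hj2 => hyp j hj1 (by omega)), swap_mul_apply, ← h2]
    exact Equiv.swap_apply_of_ne_of_ne (hyp (n+1) (by omega) le_rfl).1
      (hyp (n+1) (by omega) le_rfl).2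

/-- existence of a return time into {a,b} starting from a point of {a,b} -/
lemma ret_exists (s : X) (hs : s = a ∨ s = b) :
    ∃ j : ℕ, (σ ^ (j+1)) s = a ∨ (σ ^ (j+1)) s = b := by
  refine ⟨orderOf σ - 1, ?_⟩
  have hpos : 0 < orderOf σ := orderOf_pos σ
  have : orderOf σ - 1 + 1 = orderOf σ := by omega
  rw [this, pow_orderOf_eq_one]
  simpa using hs

variable {σ a b}

lemma sc_merge (hab : a ≠ b) (hnsc : ¬ σ.SameCycle a b) : (τ * σ).SameCycle a b := by
  classical
  set k := Nat.find (ret_exists σ a b a (Or.inl rfl)) with hk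
  have hkspec := Nat.find_spec (ret_exists σ a b a (Or.inl rfl))
  have hmin : ∀ j, 1 ≤ j → j ≤ k → (σ ^ j) a ≠ a ∧ (σ ^ j) a ≠ b := by
    intro j hj1 hj2
    have := Nat.find_min (ret_exists σ a b a (Or.inl rfl)) (m := j - 1) (by omega)
    have hj : j - 1 + 1 = j := by omega
    rw [hj] at this
    push_neg at this
    exact this
  have hit : ((τ * σ) ^ k) a = (σ ^ k) a := iter_agree σ a b a k hmin
  have hstep : ((τ * σ) ^ (k+1)) a = τ ((σ ^ (k+1)) a) := by
    rw [pow_succ', Perm.mul_apply, hit, swap_mul_apply]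
    congr 1
    rw [pow_succ', Perm.mul_apply]
  rcases hkspec with hca | hcb
  · refine ⟨(k+1 : ℕ), ?_⟩
    rw [zpow_natCast, hstep, hca, Equiv.swap_apply_left]
  · exfalso
    exact hnsc ⟨(k+1 : ℕ), by rw [zpow_natCast]; exact hcb⟩

lemma sc_split (hab : a ≠ b) (hsc : σ.SameCycle a b) : ¬ (τ * σ).SameCycle a b := by
  classical
  set k := Nat.find (ret_exists σ a b a (Or.inl rfl)) with hk
  have hkspec := Nat.find_spec (ret_exists σ a b a (Or.inl rfl))
  have hmin : ∀ j, 1 ≤ j → j ≤ k → (σ ^ j) a ≠ a ∧ (σ ^ j) a ≠ b := by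
    intro j hj1 hj2
    have := Nat.find_min (ret_exists σ a b a (Or.inl rfl)) (m := j - 1) (by omega)
    have hj : j - 1 + 1 = j := by omega
    rw [hj] at this
    push_neg at this
    exact this
  -- the return must be to b
  have hretb : (σ ^ (k+1)) a = b := by
    rcases hkspec with hca | hcb
    · exfalso
      -- period of a is k+1 and b is in the σ-orbit of a : contradiction
      obtain ⟨i, hi⟩ := hsc
      obtain ⟨r, hr, hru⟩ := zpow_mod_point σ a (k+1) (by omega) hca i
      rw [hru] at hi
      rcases Nat.eq_zero_or_pos r with h0 | hrpos
      · rw [h0] at hi; simp at hi; exact hab hi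
      · exact (hmin r hrpos (by omega)).2 hi
    · exact hcb
  have hit : ∀ j ≤ k, ((τ * σ) ^ j) a = (σ ^ j) a :=
    fun j hj => iter_agree σ a b a j (fun i h1 h2 => hmin i h1 (by omega))
  have hper : ((τ * σ) ^ (k+1)) a = a := by
    rw [pow_succ', Perm.mul_apply, hit k le_rfl, swap_mul_apply]
    have : σ ((σ ^ k) a) = (σ ^ (k+1)) a := by rw [pow_succ', Perm.mul_apply]
    rw [this, hretb, Equiv.swap_apply_right]
  rintro ⟨i, hi⟩
  obtain ⟨r, hr, hru⟩ := zpow_mod_point (τ * σ) a (k+1) (by omega) hper i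
  rw [hru] at hi
  rcases Nat.eq_zero_or_pos r with h0 | hrpos
  · rw [h0] at hi; simp at hi; exact hab hi
  · rw [hit r (by omega)] at hi
    exact (hmin r hrpos (by omega)).2 hi

/-- away from the cycles of a and b, the cycles of σ and τσ agree -/
lemma sc_away {x : X} (hxa : ¬ σ.SameCycle x a) (hxb : ¬ σ.SameCycle x b) (y : X) :
    σ.SameCycle x y ↔ (τ * σ).SameCycle x y := by
  have key : ∀ n : ℕ, ((τ * σ) ^ n) x = (σ ^ n) x := by
    intro n
    refine iter_agree σ a b x n (fun j hj1 hj2 => ?_)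
    constructor
    · intro hcon; exact hxa ⟨(j:ℤ), by rw [zpow_natCast]; exact hcon⟩
    · intro hcon; exact hxb ⟨(j:ℤ), by rw [zpow_natCast]; exact hcon⟩
  constructor
  · intro h
    rw [sameCycle_iff_nat] at h ⊢
    obtain ⟨n, hn⟩ := h
    exact ⟨n, by rw [key n]; exact hn⟩
  · intro h
    rw [sameCycle_iff_nat] at h ⊢
    obtain ⟨n, hn⟩ := h
    exact ⟨n, by rw [← key n]; exact hn⟩

end swaplemmas
section counting
variable [Fintype X]

lemma meetCard {Q : Type*} [Finite Q] (A B : Q) :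
    Nat.card {q : Q // q = A ∨ q = B} = if A = B then 1 else 2 := by
  by_cases hAB : A = B
  · subst hAB
    rw [if_pos rfl, Nat.card_eq_one_iff_unique]
    constructor
    · constructor
      intro ⟨q, hq⟩ ⟨q', hq'⟩
      apply Subtype.ext
      rcases hq with h | h <;> rcases hq' with h' | h' <;> simp [h, h']
    · exact ⟨⟨A, Or.inl rfl⟩⟩
  · rw [if_neg hAB, Nat.card_eq_two_iff]
    refine ⟨⟨A, Or.inl rfl⟩, ⟨B, Or.inr rfl⟩, ?_, ?_⟩
    · intro hcon
      exact hAB (congrArg Subtype.val hcon)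
    · ext ⟨q, hq⟩
      simp only [Set.mem_insert_iff, Set.mem_singleton_iff, Set.mem_univ, iff_true]
      rcases hq with h | h
      · left; exact Subtype.ext h
      · right; exact Subtype.ext h

lemma card_split {Q : Type*} [Finite Q] (P : Q → Prop) :
    Nat.card Q = Nat.card {q // P q} + Nat.card {q // ¬ P q} := by
  rw [← Nat.card_sum]
  exact Nat.card_congr (Equiv.sumCompl P).symm

lemma countKey (s t : Setoid X) (a b : X)
    (Hiff : ∀ x, (¬ s.r x a ∧ ¬ s.r x b) ↔ (¬ t.r x a ∧ ¬ t.r x b))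
    (Hrel : ∀ x y, ¬ s.r x a → ¬ s.r x b → (s.r x y ↔ t.r x y)) :
    Nat.card (Quotient t) + (if s.r a b then 1 else 2)
      = Nat.card (Quotient s) + (if t.r a b then 1 else 2) := by
  have hfinQs : Finite (Quotient s) := Quotient.finite s
  have hfinQt : Finite (Quotient t) := Quotient.finite t
  have favoid : ∀ q : Quotient s,
      ¬ (q = Quotient.mk s a ∨ q = Quotient.mk s b) → (¬ s.r q.out a ∧ ¬ s.r q.out b) := by
    intro q hq
    push_neg at hq
    constructor
    · intro hc
      exact hq.1 (by rw [← q.out_eq]; exact Quotient.sound hc)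
    · intro hc
      exact hq.2 (by rw [← q.out_eq]; exact Quotient.sound hc)
  have gavoid : ∀ q : Quotient t,
      ¬ (q = Quotient.mk t a ∨ q = Quotient.mk t b) → (¬ t.r q.out a ∧ ¬ t.r q.out b) := by
    intro q hq
    push_neg at hq
    constructor
    · intro hc
      exact hq.1 (by rw [← q.out_eq]; exact Quotient.sound hc)
    · intro hc
      exact hq.2 (by rw [← q.out_eq]; exact Quotient.sound hc)
  have e : {q : Quotient s // ¬ (q = Quotient.mk s a ∨ q = Quotient.mk s b)} ≃
      {q : Quotient t // ¬ (q = Quotient.mk t a ∨ q = Quotient.mk t b)} := by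
    refine ⟨fun qp => ⟨Quotient.mk t qp.1.out, ?_⟩, fun qp => ⟨Quotient.mk s qp.1.out, ?_⟩,
        ?_, ?_⟩
    · obtain ⟨hna, hnb⟩ := favoid qp.1 qp.2
      obtain ⟨hta, htb⟩ := (Hiff qp.1.out).1 ⟨hna, hnb⟩
      rintro (hq | hq)
      · exact hta (Quotient.exact hq)
      · exact htb (Quotient.exact hq)
    · obtain ⟨hta, htb⟩ := gavoid qp.1 qp.2
      obtain ⟨hna, hnb⟩ := (Hiff qp.1.out).2 ⟨hta, htb⟩
      rintro (hq | hq)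
      · exact hna (Quotient.exact hq)
      · exact hnb (Quotient.exact hq)
    · rintro ⟨q, hq⟩
      apply Subtype.ext
      obtain ⟨hna, hnb⟩ := favoid q hq
      have hty : t.r ((Quotient.mk t q.out).out) q.out := Quotient.mk_out q.out
      have hsy : s.r q.out ((Quotient.mk t q.out).out) :=
        (Hrel q.out _ hna hnb).2 (t.symm' hty)
      show Quotient.mk s ((Quotient.mk t q.out).out) = q
      exact (Quotient.sound (s.symm' hsy)).trans q.out_eq
    · rintro ⟨q, hq⟩
      apply Subtype.ext
      obtain ⟨hta, htb⟩ := gavoid q hq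
      obtain ⟨hna, hnb⟩ := (Hiff q.out).2 ⟨hta, htb⟩
      have hsx : s.r ((Quotient.mk s q.out).out) q.out := Quotient.mk_out q.out
      have hty : t.r q.out ((Quotient.mk s q.out).out) :=
        (Hrel q.out _ hna hnb).1 (s.symm' hsx)
      show Quotient.mk t ((Quotient.mk s q.out).out) = q
      exact (Quotient.sound (t.symm' hty)).trans q.out_eq
  have hcs := card_split (fun q : Quotient s => q = Quotient.mk s a ∨ q = Quotient.mk s b)
  have hct := card_split (fun q : Quotient t => q = Quotient.mk t a ∨ q = Quotient.mk t b)
  have hms : Nat.card {q : Quotient s // q = Quotient.mk s a ∨ q = Quotient.mk s b}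
      = if s.r a b then 1 else 2 := by
    rw [meetCard]
    congr 1
    simp only [eq_iff_iff]
    constructor
    · exact fun h => Quotient.exact h
    · exact fun h => Quotient.sound h
  have hmt : Nat.card {q : Quotient t // q = Quotient.mk t a ∨ q = Quotient.mk t b}
      = if t.r a b then 1 else 2 := by
    rw [meetCard]
    congr 1
    simp only [eq_iff_iff]
    constructor
    · exact fun h => Quotient.exact h
    · exact fun h => Quotient.sound h
  have hee := Nat.card_congr e
  omega

end counting
section L0
variable [Fintype X] {σ : Perm X} {a b : X}

lemma cyc_le_card (σ : Perm X) : cyc σ ≤ Fintype.card X := by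
  rw [cyc, ← Nat.card_eq_fintype_card]
  exact Nat.card_le_card_of_surjective (Quotient.mk (scSetoid σ)) Quotient.mk_surjective

lemma L0_merge (hab : a ≠ b) (h : ¬ σ.SameCycle a b) :
    cyc (Equiv.swap a b * σ) + 1 = cyc σ := by
  have hkey := countKey (scSetoid σ) (scSetoid (Equiv.swap a b * σ)) a b ?_ ?_
  · rw [if_neg (show ¬ (scSetoid σ).r a b from h),
      if_pos (show (scSetoid (Equiv.swap a b * σ)).r a b from sc_merge hab h)] at hkey
    simp only [cyc]
    omega
  · intro x
    constructor
    · rintro ⟨hxa, hxb⟩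
      exact ⟨fun hc => hxa ((sc_away hxa hxb a).2 hc), fun hc => hxb ((sc_away hxa hxb b).2 hc)⟩
    · rintro ⟨hxa, hxb⟩
      have := fun (y : X) => sc_away (σ := Equiv.swap a b * σ) (a := a) (b := b) hxa hxb y
      rw [swap_mul_self_mul] at this
      exact ⟨fun hc => hxa ((this a).2 hc), fun hc => hxb ((this b).2 hc)⟩
  · intro x y hxa hxb
    exact sc_away hxa hxb y

lemma L0_split (hab : a ≠ b) (h : σ.SameCycle a b) :
    cyc (Equiv.swap a b * σ) = cyc σ + 1 := by
  have hkey := countKey (scSetoid σ) (scSetoid (Equiv.swap a b * σ)) a b ?_ ?_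
  · rw [if_pos (show (scSetoid σ).r a b from h),
      if_neg (show ¬ (scSetoid (Equiv.swap a b * σ)).r a b from sc_split hab h)] at hkey
    simp only [cyc]
    omega
  · intro x
    constructor
    · rintro ⟨hxa, hxb⟩
      exact ⟨fun hc => hxa ((sc_away hxa hxb a).2 hc), fun hc => hxb ((sc_away hxa hxb b).2 hc)⟩
    · rintro ⟨hxa, hxb⟩
      have := fun (y : X) => sc_away (σ := Equiv.swap a b * σ) (a := a) (b := b) hxa hxb y
      rw [swap_mul_self_mul] at this
      exact ⟨fun hc => hxa ((this a).2 hc), fun hc => hxb ((this b).2 hc)⟩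
  · intro x y hxa hxb
    exact sc_away hxa hxb y

end L0
section L1sec
variable [Fintype X]

/-- the orbit setoid of the subgroup generated by two permutations -/
def orbSetoid (α β : Perm X) : Setoid X :=
  ⟨fun x y => ∃ g ∈ Subgroup.closure ({α, β} : Set (Perm X)), g x = y,
   ⟨fun x => ⟨1, one_mem _, rfl⟩,
    by
      rintro x y ⟨g, hg, rfl⟩
      exact ⟨g⁻¹, inv_mem hg, g.symm_apply_apply x⟩,
    by
      rintro x y z ⟨g, hg, rfl⟩ ⟨g', hg', rfl⟩
      exact ⟨g' * g, mul_mem hg' hg, rfl⟩⟩⟩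

def orb (α β : Perm X) : ℕ := Nat.card (Quotient (orbSetoid α β))

omit [Fintype X] in
lemma rel_closure {r : X → X → Prop} (hr : Equivalence r) {S : Set (Perm X)}
    (hgen : ∀ γ ∈ S, ∀ x, r x (γ x)) :
    ∀ g ∈ Subgroup.closure S, ∀ x, r x (g x) := by
  intro g hg
  refine Subgroup.closure_induction (p := fun g _ => ∀ x, r x (g x)) ?_ ?_ ?_ ?_ hg
  · exact fun γ hγ => hgen γ hγ
  · intro x; exact hr.refl x
  · intro u v _ _ pu pv x
    have : (u * v) x = u (v x) := rfl
    rw [this]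
    exact hr.trans (pv x) (pu (v x))
  · intro u _ pu x
    have := pu (u⁻¹ x)
    rw [Perm.coe_inv, Equiv.apply_symm_apply] at this
    exact hr.symm this

lemma sc_le_orbL (α β : Perm X) {x y : X} (h : α.SameCycle x y) : (orbSetoid α β).r x y := by
  obtain ⟨i, hi⟩ := h
  exact ⟨α ^ i, zpow_mem (Subgroup.subset_closure (by simp)) i, hi⟩

lemma sc_le_orbR (α β : Perm X) {x y : X} (h : β.SameCycle x y) : (orbSetoid α β).r x y := by
  obtain ⟨i, hi⟩ := h
  exact ⟨β ^ i, zpow_mem (Subgroup.subset_closure (by simp)) i, hi⟩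

lemma sc_mul_le_orb (α β : Perm X) {x y : X} (h : (α * β).SameCycle x y) :
    (orbSetoid α β).r x y := by
  obtain ⟨i, hi⟩ := h
  exact ⟨(α * β) ^ i,
    zpow_mem (mul_mem (Subgroup.subset_closure (by simp)) (Subgroup.subset_closure (by simp))) i,
    hi⟩

def cyc_one_quot : Quotient (scSetoid (1 : Perm X)) ≃ X := by
  refine ⟨Quotient.lift id ?_, fun x => Quotient.mk _ x, ?_, ?_⟩
  · intro x y hxy
    obtain ⟨i, hi⟩ := (hxy : (1 : Perm X).SameCycle x y)
    simpa using hi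
  · intro q
    induction q using Quotient.ind
    rfl
  · intro x
    rfl

lemma cyc_one : cyc (1 : Perm X) = Fintype.card X := by
  rw [cyc, Nat.card_congr cyc_one_quot, Nat.card_eq_fintype_card]

lemma orb_one (β : Perm X) : orbSetoid (1 : Perm X) β = scSetoid β := by
  apply Setoid.ext
  intro x y
  constructor
  · rintro ⟨g, hg, rfl⟩
    refine rel_closure (r := β.SameCycle) ⟨SameCycle.refl β, SameCycle.symm, SameCycle.trans⟩
      ?_ g hg x
    rintro γ (rfl | rfl)
    · intro x
      exact ⟨0, by simp⟩
    · intro x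
      exact ⟨1, by simp⟩
  · intro h
    exact sc_le_orbR _ _ h

/-- the setoid obtained by merging the classes of a and b -/
def pairSetoid (s : Setoid X) (a b : X) : Setoid X :=
  ⟨fun x y => s.r x y ∨ (s.r x a ∧ s.r b y) ∨ (s.r x b ∧ s.r a y),
   ⟨fun x => Or.inl (s.refl' x),
    by
      rintro x y (h | ⟨h1, h2⟩ | ⟨h1, h2⟩)
      · exact Or.inl (s.symm' h)
      · exact Or.inr (Or.inr ⟨s.symm' h2, s.symm' h1⟩)
      · exact Or.inr (Or.inl ⟨s.symm' h2, s.symm' h1⟩),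
    by
      rintro x y z (h | ⟨h1, h2⟩ | ⟨h1, h2⟩) (h' | ⟨h1', h2'⟩ | ⟨h1', h2'⟩)
      · exact Or.inl (s.trans' h h')
      · exact Or.inr (Or.inl ⟨s.trans' h h1', h2'⟩)
      · exact Or.inr (Or.inr ⟨s.trans' h h1', h2'⟩)
      · exact Or.inr (Or.inl ⟨h1, s.trans' h2 h'⟩)
      · exact Or.inr (Or.inl ⟨h1, h2'⟩)
      · exact Or.inl (s.trans' h1 h2')
      · exact Or.inr (Or.inr ⟨h1, s.trans' h2 h'⟩)
      · exact Or.inl (s.trans' h1 h2')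
      · exact Or.inr (Or.inr ⟨h1, h2'⟩)⟩⟩

lemma orb_step (α β : Perm X) (a : X) (hab : α a ≠ a) :
    orbSetoid α β = pairSetoid (orbSetoid (Equiv.swap a (α a) * α) β) a (α a) := by
  set b := α a with hb
  set α' := Equiv.swap a b * α with hα'
  have hswap : ∀ x, α' x = Equiv.swap a b (α x) := fun x => rfl
  have hswap' : ∀ x, α x = Equiv.swap a b (α' x) := by
    intro x
    rw [hswap, Equiv.swap_apply_self]
  have hJ'step : ∀ x, (orbSetoid α' β).r x (α' x) :=
    fun x => ⟨α', Subgroup.subset_closure (by simp), rfl⟩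
  have hJab : (orbSetoid α β).r a b := ⟨α, Subgroup.subset_closure (by simp), rfl⟩
  have hJstep : ∀ x, (orbSetoid α β).r x (α x) :=
    fun x => ⟨α, Subgroup.subset_closure (by simp), rfl⟩
  have hJ'le : ∀ x y, (orbSetoid α' β).r x y → (orbSetoid α β).r x y := by
    rintro x y ⟨g, hg, rfl⟩
    refine rel_closure (orbSetoid α β).iseqv ?_ g hg x
    rintro γ (rfl | rfl)
    · -- γ = α'
      intro x
      rw [hswap]
      rcases eq_or_ne (α x) a with hxa | hxa
      · rw [hxa, Equiv.swap_apply_left]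
        exact (orbSetoid α β).trans' (hJstep x) (by rw [hxa]; exact hJab)
      rcases eq_or_ne (α x) b with hxb | hxb
      · rw [hxb, Equiv.swap_apply_right]
        exact (orbSetoid α β).trans' (hJstep x)
          (by rw [hxb]; exact (orbSetoid α β).symm' hJab)
      · rw [Equiv.swap_apply_of_ne_of_ne hxa hxb]
        exact hJstep x
    · intro x
      exact sc_le_orbR _ _ ⟨1, by simp⟩
  apply Setoid.ext
  intro x y
  constructor
  · rintro ⟨g, hg, rfl⟩
    refine rel_closure (pairSetoid (orbSetoid α' β) a b).iseqv ?_ g hg x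
    rintro γ (rfl | rfl)
    · -- γ = α
      intro x
      rw [hswap']
      rcases eq_or_ne (α' x) a with hxa | hxa
      · rw [hxa, Equiv.swap_apply_left]
        exact Or.inr (Or.inl ⟨by rw [← hxa]; exact hJ'step x, (orbSetoid α' β).refl' b⟩)
      rcases eq_or_ne (α' x) b with hxb | hxb
      · rw [hxb, Equiv.swap_apply_right]
        exact Or.inr (Or.inr ⟨by rw [← hxb]; exact hJ'step x, (orbSetoid α' β).refl' a⟩)
      · rw [Equiv.swap_apply_of_ne_of_ne hxa hxb]
        exact Or.inl (hJ'step x)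
    · intro x
      exact Or.inl (sc_le_orbR _ _ ⟨1, by simp⟩)
  · rintro (h | ⟨h1, h2⟩ | ⟨h1, h2⟩)
    · exact hJ'le _ _ h
    · exact (orbSetoid α β).trans' (hJ'le _ _ h1)
        ((orbSetoid α β).trans' hJab (hJ'le _ _ h2))
    · exact (orbSetoid α β).trans' (hJ'le _ _ h1)
        ((orbSetoid α β).trans' ((orbSetoid α β).symm' hJab) (hJ'le _ _ h2))

lemma orb_card_step (α β : Perm X) (a : X) (hab : α a ≠ a) :
    orb α β + (if (orbSetoid (Equiv.swap a (α a) * α) β).r a (α a) then 1 else 2)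
      = orb (Equiv.swap a (α a) * α) β + 1 := by
  set b := α a with hb
  set α' := Equiv.swap a b * α with hα'
  set s := orbSetoid α' β with hs
  have hkey := countKey s (pairSetoid s a b) a b ?_ ?_
  · have hpair : (pairSetoid s a b).r a b := Or.inr (Or.inl ⟨s.refl' a, s.refl' b⟩)
    rw [if_pos hpair] at hkey
    have : orb α β = Nat.card (Quotient (pairSetoid s a b)) := by
      rw [orb, orb_step α β a hab]
    rw [this, orb, ← hs]
    exact hkey
  · intro x
    constructor
    · rintro ⟨hxa, hxb⟩
      constructor
      · rintro (h | ⟨h1, h2⟩ | ⟨h1, h2⟩)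
        · exact hxa h
        · exact hxa h1
        · exact hxb h1
      · rintro (h | ⟨h1, h2⟩ | ⟨h1, h2⟩)
        · exact hxb h
        · exact hxa h1
        · exact hxb h1
    · rintro ⟨hxa, hxb⟩
      exact ⟨fun h => hxa (Or.inl h), fun h => hxb (Or.inl h)⟩
  · intro x y hxa hxb
    constructor
    · exact fun h => Or.inl h
    · rintro (h | ⟨h1, h2⟩ | ⟨h1, h2⟩)
      · exact h
      · exact absurd h1 hxa
      · exact absurd h1 hxb

theorem euler_bound (α β : Perm X) :
    cyc α + cyc β + cyc (α * β) ≤ Fintype.card X + 2 * orb α β := by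
  suffices H : ∀ (k : ℕ) (α β : Perm X), Fintype.card X - cyc α = k →
      cyc α + cyc β + cyc (α * β) ≤ Fintype.card X + 2 * orb α β from H _ α β rfl
  intro k
  induction k using Nat.strong_induction_on with
  | _ k IH =>
    intro α β hk
    by_cases h1 : α = 1
    · subst h1
      rw [cyc_one, one_mul, orb, orb_one]
      have : cyc β = Nat.card (Quotient (scSetoid β)) := rfl
      omega
    · have hex : ∃ a, α a ≠ a := by
        by_contra hcon
        push_neg at hcon
        exact h1 (Equiv.ext fun x => hcon x)
      obtain ⟨a, ha⟩ := hex
      set b := α a with hb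
      have hab : a ≠ b := fun h => ha (by rw [← h])
      set α' := Equiv.swap a b * α with hα'
      have hsc : α.SameCycle a b := ⟨1, by rw [zpow_one, hb]⟩
      have hc' : cyc α' = cyc α + 1 := L0_split hab hsc
      have hle' : cyc α' ≤ Fintype.card X := cyc_le_card α'
      have hklt : Fintype.card X - cyc α' < k := by omega
      have IHa := IH _ hklt α' β rfl
      have hαeq : Equiv.swap a b * α' = α := swap_mul_self_mul a b α
      have hprod : α * β = Equiv.swap a b * (α' * β) := by
        rw [← hαeq, mul_assoc]
      have horb := orb_card_step α β a ha
      rw [← hb, ← hα'] at horb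
      by_cases hsc2 : (α' * β).SameCycle a b
      · have hJ : (orbSetoid α' β).r a b := sc_mul_le_orb α' β hsc2
        rw [if_pos hJ] at horb
        have hms : cyc (α * β) = cyc (α' * β) + 1 := by
          rw [hprod]
          exact L0_split hab hsc2
        omega
      · have hJ2 := L0_merge hab hsc2
        have hms : cyc (α * β) + 1 = cyc (α' * β) := by
          rw [hprod]
          exact hJ2
        have horb' : orb α' β ≤ orb α β + 1 := by
          by_cases hJ : (orbSetoid α' β).r a b
          · rw [if_pos hJ] at horb; omega
          · rw [if_neg hJ] at horb; omega
        omega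
end L1sec
section structcount
variable [Fintype X]

lemma card_eq_const_mul {A B : Type*} [Finite A] [Finite B] (f : A → B) (k : ℕ)
    (hf : ∀ b, Nat.card {a // f a = b} = k) :
    Nat.card A = k * Nat.card B := by
  letI : Fintype A := Fintype.ofFinite A
  letI : Fintype B := Fintype.ofFinite B
  classical
  have h1 : Nat.card A = Nat.card (Σ b : B, {a // f a = b}) :=
    Nat.card_congr (Equiv.sigmaFiberEquiv f).symm
  rw [h1, Nat.card_eq_fintype_card, Fintype.card_sigma]
  rw [Nat.card_eq_fintype_card]
  have : ∀ b : B, Fintype.card {a // f a = b} = k := by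
    intro b
    rw [← Nat.card_eq_fintype_card]
    exact hf b
  simp only [this, Finset.sum_const, Finset.card_univ, smul_eq_mul]
  ring

lemma zpow_invol (u : Perm X) (h2 : u * u = 1) : ∀ i : ℤ, u ^ i = 1 ∨ u ^ i = u := by
  intro i
  have h2' : u ^ (2:ℤ) = 1 := by
    rw [show (2:ℤ) = (2:ℕ) by norm_num, zpow_natCast, pow_two]
    exact h2
  have hdecomp : i = 2 * (i / 2) + i % 2 := (Int.mul_ediv_add_emod i 2).symm
  have hpows : u ^ i = u ^ (i % 2) := by
    conv_lhs => rw [hdecomp]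
    rw [zpow_add, zpow_mul, h2', one_zpow, one_mul]
  have : i % 2 = 0 ∨ i % 2 = 1 := by omega
  rcases this with h | h
  · left; rw [hpows, h, zpow_zero]
  · right; rw [hpows, h, zpow_one]

lemma zpow_three (u : Perm X) (h3 : u * u * u = 1) :
    ∀ i : ℤ, u ^ i = 1 ∨ u ^ i = u ∨ u ^ i = u * u := by
  intro i
  have h3' : u ^ (3:ℤ) = 1 := by
    rw [show (3:ℤ) = (3:ℕ) by norm_num, zpow_natCast, pow_succ, pow_two]
    exact h3
  have hdecomp : i = 3 * (i / 3) + i % 3 := (Int.mul_ediv_add_emod i 3).symm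
  have hpows : u ^ i = u ^ (i % 3) := by
    conv_lhs => rw [hdecomp]
    rw [zpow_add, zpow_mul, h3', one_zpow, one_mul]
  have : i % 3 = 0 ∨ i % 3 = 1 ∨ i % 3 = 2 := by omega
  rcases this with h | h | h
  · left; rw [hpows, h, zpow_zero]
  · right; left; rw [hpows, h, zpow_one]
  · right; right; rw [hpows, h]
    rw [show (2:ℤ) = (2:ℕ) by norm_num, zpow_natCast, pow_two]

lemma sc_invol (u : Perm X) (h2 : u * u = 1) (x y : X) :
    u.SameCycle x y ↔ (y = x ∨ y = u x) := by
  constructor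
  · rintro ⟨i, hi⟩
    rcases zpow_invol u h2 i with h | h <;> rw [h] at hi
    · left; exact hi.symm
    · right; exact hi.symm
  · rintro (rfl | rfl)
    · exact SameCycle.refl u y
    · exact ⟨1, by rw [zpow_one]⟩

lemma sc_three (u : Perm X) (h3 : u * u * u = 1) (x y : X) :
    u.SameCycle x y ↔ (y = x ∨ y = u x ∨ y = u (u x)) := by
  constructor
  · rintro ⟨i, hi⟩
    rcases zpow_three u h3 i with h | h | h <;> rw [h] at hi
    · left; exact hi.symm
    · right; left; exact hi.symm
    · right; right; rw [← hi]; rfl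
  · rintro (rfl | rfl | rfl)
    · exact SameCycle.refl u y
    · exact ⟨1, by rw [zpow_one]⟩
    · exact ⟨2, by rw [show (2:ℤ) = (2:ℕ) by norm_num, zpow_natCast, pow_two]; rfl⟩

/-- cycle count of a free involution-like perm with fixed points -/
lemma invol_cyc (u : Perm X) (h2 : u * u = 1) :
    Nat.card X + Nat.card {x // u x = x} = 2 * cyc u := by
  classical
  have hfin : Finite (Quotient (scSetoid u)) := Quotient.finite _
  have huux : ∀ y, u (u y) = y := by
    intro y
    have := congrArg (fun v => v y) h2
    simpa using this
  set h : X ⊕ {x // u x = x} → Quotient (scSetoid u) :=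
    (fun p => match p with
      | Sum.inl x => Quotient.mk (scSetoid u) x
      | Sum.inr x => Quotient.mk (scSetoid u) x.1) with hh
  have hfib : ∀ q, Nat.card {p // h p = q} = 2 := by
    intro q
    set x := q.out with hx
    have hq : Quotient.mk (scSetoid u) x = q := q.out_eq
    have hmem : ∀ y : X, (Quotient.mk (scSetoid u) y = q) ↔ (y = x ∨ y = u x) := by
      intro y
      rw [← hq]
      constructor
      · intro hy
        exact (sc_invol u h2 x y).1 ((scSetoid u).symm' (Quotient.exact hy))
      · intro hy
        exact Quotient.sound ((scSetoid u).symm' ((sc_invol u h2 x y).2 hy))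
    rw [Nat.card_eq_two_iff]
    by_cases hfix : u x = x
    · refine ⟨⟨Sum.inl x, (hmem x).2 (Or.inl rfl)⟩,
        ⟨Sum.inr ⟨x, hfix⟩, (hmem x).2 (Or.inl rfl)⟩, ?_, ?_⟩
      · intro hcon
        have := congrArg Subtype.val hcon
        simp at this
      · ext ⟨p, hp⟩
        simp only [Set.mem_insert_iff, Set.mem_singleton_iff, Set.mem_univ, iff_true]
        cases p with
        | inl y =>
          left
          apply Subtype.ext
          show Sum.inl y = Sum.inl x
          rcases (hmem y).1 hp with h | h
          · rw [h]
          · rw [hfix] at h; rw [h]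
        | inr yy =>
          right
          apply Subtype.ext
          show Sum.inr yy = Sum.inr ⟨x, hfix⟩
          congr 1
          apply Subtype.ext
          show yy.1 = x
          rcases (hmem yy.1).1 hp with h | h
          · exact h
          · rw [hfix] at h; exact h
    · refine ⟨⟨Sum.inl x, (hmem x).2 (Or.inl rfl)⟩,
        ⟨Sum.inl (u x), (hmem (u x)).2 (Or.inr rfl)⟩, ?_, ?_⟩
      · intro hcon
        have := congrArg Subtype.val hcon
        simp only [Sum.inl.injEq] at this
        exact hfix this.symm
      · ext ⟨p, hp⟩
        simp only [Set.mem_insert_iff, Set.mem_singleton_iff, Set.mem_univ, iff_true]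
        cases p with
        | inl y =>
          rcases (hmem y).1 hp with h | h
          · left
            apply Subtype.ext
            show Sum.inl y = Sum.inl x
            rw [h]
          · right
            apply Subtype.ext
            show Sum.inl y = Sum.inl (u x)
            rw [h]
        | inr yy =>
          exfalso
          rcases (hmem yy.1).1 hp with h | h
          · have := yy.2
            rw [h] at this
            exact hfix this
          · have := yy.2
            rw [h] at this
            rw [huux x] at this
            exact hfix this.symm
  have := card_eq_const_mul h 2 hfib
  rw [Nat.card_sum] at this
  rw [this, cyc]

/-- cycle count of a fixed-point free "order 3" perm -/
lemma three_cyc (u : Perm X) (h3 : u * u * u = 1) (hf1 : ∀ x, u x ≠ x)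
    (hf2 : ∀ x, u (u x) ≠ x) : Nat.card X = 3 * cyc u := by
  classical
  have huu : ∀ x, u (u (u x)) = x := by
    intro x
    have := congrArg (fun v => v x) h3
    simpa using this
  rw [cyc]
  refine card_eq_const_mul (fun y => Quotient.mk (scSetoid u) y) 3 ?_
  intro q
  set x := q.out with hx
  have hq : Quotient.mk (scSetoid u) x = q := q.out_eq
  have hmem : ∀ y : X, (Quotient.mk (scSetoid u) y = q) ↔ (y = x ∨ y = u x ∨ y = u (u x)) := by
    intro y
    rw [← hq]
    constructor
    · intro hy
      exact (sc_three u h3 x y).1 ((scSetoid u).symm' (Quotient.exact hy))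
    · intro hy
      exact Quotient.sound ((scSetoid u).symm' ((sc_three u h3 x y).2 hy))
  rw [Nat.card_eq_fintype_card, Fintype.card_subtype]
  have : Finset.univ.filter (fun y => Quotient.mk (scSetoid u) y = q)
      = ({x, u x, u (u x)} : Finset X) := by
    ext y
    simp only [Finset.mem_filter, Finset.mem_univ, true_and, Finset.mem_insert,
      Finset.mem_singleton]
    exact hmem y
  rw [this]
  rw [Finset.card_insert_of_notMem, Finset.card_insert_of_notMem, Finset.card_singleton]
  · simp only [Finset.mem_singleton]
    intro hcon
    exact hf1 (u x) (by rw [← hcon])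
  · simp only [Finset.mem_insert, Finset.mem_singleton]
    push_neg
    exact ⟨fun hcon => hf1 x hcon.symm, fun hcon => hf2 x (by rw [← hcon])⟩

lemma three_dvd (u : Perm X) (h3 : u * u * u = 1) (hf1 : ∀ x, u x ≠ x)
    (hf2 : ∀ x, u (u x) ≠ x) (p : X → Prop) (hp : ∀ x, p x → p (u x)) :
    3 ∣ Nat.card {x // p x} := by
  classical
  have huu : ∀ x, u (u (u x)) = x := by
    intro x
    have := congrArg (fun v => v x) h3
    simpa using this
  have hiff : ∀ x, p x ↔ p (u x) := by
    intro x
    refine ⟨hp x, fun hx => ?_⟩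
    have := hp _ (hp _ hx)
    rwa [huu] at this
  set v : Perm {x // p x} := u.subtypePerm (fun x => (hiff x).symm) with hv
  have hv3 : v * v * v = 1 := by
    ext y
    have : ((v * v * v) y).1 = y.1 := by
      simp only [Perm.mul_apply, hv, Perm.subtypePerm_apply]
      exact huu y.1
    simpa [Subtype.ext_iff] using this
  have hvf1 : ∀ y, v y ≠ y := by
    rintro ⟨y, hy⟩ hcon
    exact hf1 y (congrArg Subtype.val hcon)
  have hvf2 : ∀ y, v (v y) ≠ y := by
    rintro ⟨y, hy⟩ hcon
    exact hf2 y (congrArg Subtype.val hcon)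
  have := three_cyc v hv3 hvf1 hvf2
  exact ⟨cyc v, this⟩

/-- cycle count when all non-fixed points lie in one cycle -/
lemma fix_plus_one_cyc (u : Perm X) (e₀ : X) (h0 : u e₀ ≠ e₀)
    (hcov : ∀ y, u y = y ∨ u.SameCycle e₀ y) :
    cyc u = Nat.card {y // u y = y} + 1 := by
  classical
  have key : ∀ y : X, u y = y → ∀ i : ℤ, (u ^ i) y = y := fun y hy => zpow_fix u hy
  have e : ({y // u y = y} ⊕ Unit) ≃ Quotient (scSetoid u) := by
    refine Equiv.ofBijective (fun p => match p with
      | Sum.inl y => Quotient.mk (scSetoid u) y.1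
      | Sum.inr _ => Quotient.mk (scSetoid u) e₀) ⟨?_, ?_⟩
    · rintro (⟨y, hy⟩ | ⟨⟩) (⟨y', hy'⟩ | ⟨⟩) hp
      · have hrel : u.SameCycle y y' := Quotient.exact hp
        obtain ⟨i, hi⟩ := hrel
        rw [key y hy i] at hi
        exact congrArg Sum.inl (Subtype.ext hi)
      · exfalso
        have hrel : u.SameCycle y e₀ := Quotient.exact hp
        obtain ⟨i, hi⟩ := hrel
        rw [key y hy i] at hi
        rw [hi] at hy
        exact h0 hy
      · exfalso
        have hrel : u.SameCycle e₀ y' := Quotient.exact hp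
        obtain ⟨i, hi⟩ := hrel
        have h2 := key y' hy' (-i)
        rw [← hi] at h2
        have h3 : (u ^ (-i)) ((u ^ i) e₀) = e₀ := by
          rw [← Perm.mul_apply, ← zpow_add]
          simp
        rw [h3] at h2
        rw [hi] at h2
        rw [← h2] at hy'
        exact h0 hy'
      · rfl
    · intro q
      rcases hcov q.out with hfix | hsc
      · exact ⟨Sum.inl ⟨q.out, hfix⟩, q.out_eq⟩
      · refine ⟨Sum.inr (), ?_⟩
        exact (Quotient.sound hsc).trans q.out_eq
  have := Nat.card_congr e
  rw [Nat.card_sum] at this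
  rw [cyc, ← this]
  simp
end structcount
section grpdvd
variable [Fintype X]

lemma grp_dvd (H : Subgroup (Perm X)) (p : X → Prop)
    (hp : ∀ φ ∈ H, ∀ x, p x → p (φ x))
    (hfree : ∀ φ ∈ H, ∀ x : X, φ x = x → φ = 1) :
    Nat.card H ∣ Nat.card {x // p x} := by
  classical
  set s : Setoid {x // p x} :=
    ⟨fun y y' => ∃ φ ∈ H, φ y.1 = y'.1,
     ⟨fun y => ⟨1, one_mem _, rfl⟩,
      by
        rintro y y' ⟨φ, hφ, hy⟩
        exact ⟨φ⁻¹, inv_mem hφ, by rw [← hy, Perm.coe_inv, Equiv.symm_apply_apply]⟩,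
      by
        rintro y y' y'' ⟨φ, hφ, hy⟩ ⟨φ', hφ', hy'⟩
        exact ⟨φ' * φ, mul_mem hφ' hφ, by rw [Perm.mul_apply, hy, hy']⟩⟩⟩ with hs
  refine ⟨Nat.card (Quotient s), ?_⟩
  refine card_eq_const_mul (Quotient.mk s) (Nat.card H) ?_
  intro q
  have e : ↥H ≃ {a : {x // p x} // Quotient.mk s a = q} := by
    refine Equiv.ofBijective
      (fun φ => ⟨⟨φ.1 q.out.1, hp φ.1 φ.2 _ q.out.2⟩, ?_⟩) ⟨?_, ?_⟩
    · refine (Quotient.sound ?_).trans q.out_eq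
      exact ⟨(φ.1)⁻¹, inv_mem φ.2, by exact (φ.1).symm_apply_apply _⟩
    · intro φ φ' hpp
      have h1 : φ.1 q.out.1 = φ'.1 q.out.1 := by
        have := congrArg (fun a => a.1.1) hpp
        exact this
      have h2 : ((φ'.1)⁻¹ * φ.1) q.out.1 = q.out.1 := by
        rw [Perm.mul_apply, h1, Perm.coe_inv, Equiv.symm_apply_apply]
      have h3 := hfree _ (mul_mem (inv_mem φ'.2) φ.2) _ h2
      have h4 : φ.1 = φ'.1 := by
        rw [inv_mul_eq_one] at h3
        exact h3.symm
      exact Subtype.ext h4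
    · rintro ⟨⟨y, py⟩, hy⟩
      have hrel : s.r ⟨y, py⟩ q.out := Quotient.exact (hy.trans q.out_eq.symm)
      obtain ⟨χ, hχ, hχy⟩ := hrel
      refine ⟨⟨χ⁻¹, inv_mem hχ⟩, ?_⟩
      apply Subtype.ext
      apply Subtype.ext
      show χ⁻¹ q.out.1 = y
      rw [← hχy, Perm.coe_inv, Equiv.symm_apply_apply]
  exact (Nat.card_congr e).symm

end grpdvd

section quot
variable [Fintype X] (ψ : Perm X) (hψψ : ∀ x, ψ (ψ x) = x)

def qSetoid : Setoid X :=
  ⟨fun x y => y = x ∨ y = ψ x,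
   ⟨fun x => Or.inl rfl,
    by
      rintro x y (rfl | rfl)
      · exact Or.inl rfl
      · exact Or.inr (hψψ x).symm,
    by
      rintro x y z (rfl | rfl) (rfl | rfl)
      · exact Or.inl rfl
      · exact Or.inr rfl
      · exact Or.inr rfl
      · exact Or.inl (hψψ x)⟩⟩

def qmap (u : Perm X) (hc : ∀ x, u (ψ x) = ψ (u x)) :
    Perm (Quotient (qSetoid ψ hψψ)) := by
  have hc' : ∀ x, u.symm (ψ x) = ψ (u.symm x) := by
    intro x
    apply u.injective
    rw [Equiv.apply_symm_apply, hc, Equiv.apply_symm_apply]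
  refine ⟨Quotient.map u ?_, Quotient.map u.symm ?_, ?_, ?_⟩
  · rintro a b (rfl | rfl)
    · exact Or.inl rfl
    · exact Or.inr (hc a)
  · rintro a b (rfl | rfl)
    · exact Or.inl rfl
    · exact Or.inr (hc' a)
  · intro q
    induction q using Quotient.ind with
    | _ a => simp [Quotient.map_mk]
  · intro q
    induction q using Quotient.ind with
    | _ a => simp [Quotient.map_mk]

lemma qmap_mk (u : Perm X) (hc : ∀ x, u (ψ x) = ψ (u x)) (e : X) :
    qmap ψ hψψ u hc (Quotient.mk (qSetoid ψ hψψ) e)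
      = Quotient.mk (qSetoid ψ hψψ) (u e) := rfl

lemma qmap_zpow (u : Perm X) (hc : ∀ x, u (ψ x) = ψ (u x)) :
    ∀ (i : ℤ) (e : X), ((qmap ψ hψψ u hc) ^ i) (Quotient.mk (qSetoid ψ hψψ) e)
      = Quotient.mk (qSetoid ψ hψψ) ((u ^ i) e) := by
  have hnat : ∀ (n : ℕ) (e : X), ((qmap ψ hψψ u hc) ^ n) (Quotient.mk (qSetoid ψ hψψ) e)
      = Quotient.mk (qSetoid ψ hψψ) ((u ^ n) e) := by
    intro n
    induction n with
    | zero => intro e; simp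
    | succ n ih =>
      intro e
      rw [pow_succ', pow_succ', Perm.mul_apply, Perm.mul_apply, ih, qmap_mk]
  intro i e
  rcases i with n | n
  · simpa using hnat n e
  · rw [Int.negSucc_eq]
    apply ((qmap ψ hψψ u hc) ^ ((n : ℤ) + 1)).injective
    have h1 : ∀ (v : Perm X) (x : X), (v ^ ((n : ℤ) + 1)) ((v ^ (-((n : ℤ) + 1))) x) = x := by
      intro v x
      rw [← Perm.mul_apply, ← zpow_add, add_neg_cancel, zpow_zero, Perm.one_apply]
    have h1q : ∀ (v : Perm (Quotient (qSetoid ψ hψψ))) (x : Quotient (qSetoid ψ hψψ)),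
        (v ^ ((n : ℤ) + 1)) ((v ^ (-((n : ℤ) + 1))) x) = x := by
      intro v x
      rw [← Perm.mul_apply, ← zpow_add, add_neg_cancel, zpow_zero, Perm.one_apply]
    rw [h1q (qmap ψ hψψ u hc) (Quotient.mk (qSetoid ψ hψψ) e)]
    have h2 : ((n : ℤ) + 1) = ((n + 1 : ℕ) : ℤ) := by push_cast; ring
    rw [h2, zpow_natCast, hnat, ← zpow_natCast u (n+1), ← h2, h1 u e]

end quot
section quot2
variable {X : Type*} [Fintype X] (ψ : Perm X) (hψψ : ∀ x, ψ (ψ x) = x)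

lemma q_mem (q : Quotient (qSetoid ψ hψψ)) (y : X) :
    (Quotient.mk (qSetoid ψ hψψ) y = q) ↔ (y = q.out ∨ y = ψ q.out) := by
  constructor
  · intro hy
    rcases (Quotient.exact (hy.trans q.out_eq.symm) : (qSetoid ψ hψψ).r y q.out) with h | h
    · exact Or.inl h.symm
    · right
      rw [h]
      exact (hψψ y).symm
  · rintro (h | h)
    · rw [h]
      exact q.out_eq
    · rw [h]
      exact (Quotient.sound (Or.inr (hψψ q.out).symm)).trans q.out_eq

lemma q_card (hψfree : ∀ x, ψ x ≠ x) :
    Nat.card X = 2 * Nat.card (Quotient (qSetoid ψ hψψ)) := by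
  classical
  have hfin : Finite (Quotient (qSetoid ψ hψψ)) := Quotient.finite _
  refine card_eq_const_mul (Quotient.mk (qSetoid ψ hψψ)) 2 ?_
  intro q
  rw [Nat.card_eq_two_iff]
  refine ⟨⟨q.out, (q_mem ψ hψψ q q.out).2 (Or.inl rfl)⟩,
    ⟨ψ q.out, (q_mem ψ hψψ q (ψ q.out)).2 (Or.inr rfl)⟩, ?_, ?_⟩
  · intro hcon
    exact hψfree q.out (congrArg Subtype.val hcon).symm
  · ext ⟨y, hy⟩
    simp only [Set.mem_insert_iff, Set.mem_singleton_iff, Set.mem_univ, iff_true]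
    rcases (q_mem ψ hψψ q y).1 hy with h | h
    · left; exact Subtype.ext h
    · right; exact Subtype.ext h

lemma qfix_card (u : Perm X) (hc : ∀ x, u (ψ x) = ψ (u x)) (hψfree : ∀ x, ψ x ≠ x)
    (hne : ∀ x, u x ≠ ψ x) :
    Nat.card {x // u x = x}
      = 2 * Nat.card {q : Quotient (qSetoid ψ hψψ) // qmap ψ hψψ u hc q = q} := by
  classical
  have hmapfix : ∀ (y : {x // u x = x}),
      qmap ψ hψψ u hc (Quotient.mk (qSetoid ψ hψψ) y.1) = Quotient.mk (qSetoid ψ hψψ) y.1 :=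
    fun y => by rw [qmap_mk, y.2]
  refine card_eq_const_mul
    (fun (y : {x // u x = x}) =>
      (⟨Quotient.mk (qSetoid ψ hψψ) y.1, hmapfix y⟩ :
        {q : Quotient (qSetoid ψ hψψ) // qmap ψ hψψ u hc q = q})) 2 ?_
  rintro ⟨q, hq⟩
  have hxfix : u q.out = q.out := by
    have h1 : qmap ψ hψψ u hc (Quotient.mk (qSetoid ψ hψψ) q.out)
        = Quotient.mk (qSetoid ψ hψψ) q.out := by
      rw [q.out_eq]
      exact hq
    rw [qmap_mk] at h1
    rcases (q_mem ψ hψψ q (u q.out)).1 (by rw [h1, q.out_eq]) with h | h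
    · exact h
    · exact absurd h (hne q.out)
  have hpsifix : u (ψ q.out) = ψ q.out := by rw [hc, hxfix]
  rw [Nat.card_eq_two_iff]
  refine ⟨⟨⟨q.out, hxfix⟩, Subtype.ext ((q_mem ψ hψψ q q.out).2 (Or.inl rfl))⟩,
    ⟨⟨ψ q.out, hpsifix⟩, Subtype.ext ((q_mem ψ hψψ q (ψ q.out)).2 (Or.inr rfl))⟩, ?_, ?_⟩
  · intro hcon
    have := congrArg (fun a => a.1.1) hcon
    exact hψfree q.out (this).symm
  · ext ⟨⟨y, hy⟩, hfib⟩
    simp only [Set.mem_insert_iff, Set.mem_singleton_iff, Set.mem_univ, iff_true]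
    have hyq : Quotient.mk (qSetoid ψ hψψ) y = q := congrArg Subtype.val hfib
    rcases (q_mem ψ hψψ q y).1 hyq with h | h
    · left; exact Subtype.ext (Subtype.ext h)
    · right; exact Subtype.ext (Subtype.ext h)

end quot2
end PTaux

open PTaux

/-- A (finite) 3-regular ribbon graph together with connectedness: a 3-skeleton.
`E` is the set of ends of edges, `op` is a free involution (sending an end to the
other end of the same edge) and `nx` is a free automorphism of order 3 (the next
end at the same vertex in the cyclic order). -/
structure ThreeSkeleton where
  E : Type
  fintypeE : Fintype E
  op : Equiv.Perm E
  nx : Equiv.Perm E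
  op_free : ∀ e, op e ≠ e
  op_invol : ∀ e, op (op e) = e
  nx_free : ∀ e, nx e ≠ e
  nx_order : ∀ e, nx (nx (nx e)) = e
  connected : ∀ e e' : E,
    ∃ g ∈ Subgroup.closure ({op, nx} : Set (Equiv.Perm E)), g e = e'

/-- The permutation whose orbits are the faces (regions) of the ribbon graph. -/
def ThreeSkeleton.z (Sk : ThreeSkeleton) : Equiv.Perm Sk.E :=
  Sk.op.trans Sk.nx.symm

/-- A pseudo-tree: a 3-skeleton obtained from an admissible plane tree by attaching
a loop at each leaf.  Combinatorially: all faces except exactly one are monogonal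
(fixed points of `z`), and the Euler characteristic is that of the sphere, i.e.
with `|E| = 6n` there are `n + 1` monogonal faces, so `6·#fix(z) = |E| + 6`. -/
def IsPseudoTree (Sk : ThreeSkeleton) : Prop :=
  (∃ e₀ : Sk.E, Sk.z e₀ ≠ e₀ ∧ ∀ e : Sk.E, Sk.z e = e ∨ Sk.z.SameCycle e₀ e) ∧
  6 * Nat.card {e : Sk.E // Sk.z e = e} = Nat.card Sk.E + 6

/-- The automorphism group of a ribbon graph: permutations of the set of edge ends
commuting with both `op` and `nx`. -/
def ribbonAut (Sk : ThreeSkeleton) : Subgroup (Equiv.Perm Sk.E) :=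
  Subgroup.centralizer ({Sk.op, Sk.nx} : Set (Equiv.Perm Sk.E))

theorem stmt_15 (Sk : ThreeSkeleton) (h : IsPseudoTree Sk) :
    Nat.card (ribbonAut Sk) ≤ 3 ∧
    ∀ φ ∈ ribbonAut Sk, ∀ e : Sk.E, φ e = e → φ = 1 := by
  classical
  letI := Sk.fintypeE
  obtain ⟨⟨e₀, hz0, hcov⟩, hcount⟩ := h
  -- commutation facts
  have hmem_comm : ∀ φ ∈ ribbonAut Sk, (Sk.op * φ = φ * Sk.op) ∧ (Sk.nx * φ = φ * Sk.nx) := by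
    intro φ hφ
    rw [ribbonAut, Subgroup.mem_centralizer_iff] at hφ
    exact ⟨hφ Sk.op (by simp), hφ Sk.nx (by simp)⟩
  have hzdef : Sk.z = Sk.nx⁻¹ * Sk.op := rfl
  have hz_comm : ∀ φ ∈ ribbonAut Sk, Sk.z * φ = φ * Sk.z := by
    intro φ hφ
    obtain ⟨hop, hnx⟩ := hmem_comm φ hφ
    have c1 : Commute Sk.op φ := hop
    have c2 : Commute Sk.nx φ := hnx
    have := Commute.mul_left c2.inv_left c1
    rw [hzdef]
    exact this
  -- Part 2: freeness
  have hfree : ∀ φ ∈ ribbonAut Sk, ∀ e : Sk.E, φ e = e → φ = 1 := by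
    intro φ hφ e he
    have hcomm : ∀ g ∈ Subgroup.closure ({Sk.op, Sk.nx} : Set (Equiv.Perm Sk.E)),
        g * φ = φ * g := by
      intro g hg
      refine Subgroup.closure_induction (p := fun g _ => g * φ = φ * g) ?_ ?_ ?_ ?_ hg
      · rintro γ (rfl | rfl)
        · exact (hmem_comm φ hφ).1
        · exact (hmem_comm φ hφ).2
      · show (1 : Equiv.Perm Sk.E) * φ = φ * 1
        rw [one_mul, mul_one]
      · intro x y _ _ px py
        show (x * y) * φ = φ * (x * y)
        rw [mul_assoc, py, ← mul_assoc, px, mul_assoc]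
      · intro x _ px
        show x⁻¹ * φ = φ * x⁻¹
        exact (Commute.inv_left px : Commute x⁻¹ φ)
    ext e'
    obtain ⟨g, hg, hge⟩ := Sk.connected e e'
    have h1 : φ e' = e' := by
      rw [← hge]
      calc φ (g e) = (φ * g) e := rfl
        _ = (g * φ) e := by rw [hcomm g hg]
        _ = g (φ e) := rfl
        _ = g e := by rw [he]
    simpa using h1
  refine ⟨?_, hfree⟩
  -- Part 1
  have hbig : ∀ φ ∈ ribbonAut Sk, ∃ i : ℤ, (Sk.z ^ i) e₀ = φ e₀ := by
    intro φ hφ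
    have hzφ := hz_comm φ hφ
    have h1 : Sk.z (φ e₀) ≠ φ e₀ := by
      intro hcon
      apply hz0
      have h2 : Sk.z (φ e₀) = φ (Sk.z e₀) := by
        calc Sk.z (φ e₀) = (Sk.z * φ) e₀ := rfl
          _ = (φ * Sk.z) e₀ := by rw [hzφ]
          _ = φ (Sk.z e₀) := rfl
      rw [h2] at hcon
      exact φ.injective hcon
    rcases hcov (φ e₀) with hfx | hsc
    · exact absurd hfx h1
    · exact hsc
  have hcommPt : ∀ (u φ : Equiv.Perm Sk.E), u * φ = φ * u → ∀ x, φ (u x) = u (φ x) := by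
    intro u φ hcom x
    calc φ (u x) = (φ * u) x := rfl
      _ = (u * φ) x := by rw [hcom]
      _ = u (φ x) := rfl
  have hzPt : ∀ φ ∈ ribbonAut Sk, ∀ (k : ℤ) (x : Sk.E),
      φ ((Sk.z ^ k) x) = (Sk.z ^ k) (φ x) := by
    intro φ hφ k x
    have c : Commute Sk.z φ := hz_comm φ hφ
    have h2 : Sk.z ^ k * φ = φ * Sk.z ^ k := c.zpow_left k
    exact hcommPt (Sk.z ^ k) φ h2 x
  have habel : ∀ φ ∈ ribbonAut Sk, ∀ χ ∈ ribbonAut Sk, φ * χ = χ * φ := by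
    intro φ hφ χ hχ
    obtain ⟨i, hi⟩ := hbig φ hφ
    obtain ⟨j, hj⟩ := hbig χ hχ
    have key : (φ * χ) e₀ = (χ * φ) e₀ := by
      have e1 : φ (χ e₀) = (Sk.z ^ (i + j)) e₀ := by
        rw [← hj, hzPt φ hφ j e₀, ← hi, ← Equiv.Perm.mul_apply, ← zpow_add, add_comm j i]
      have e2 : χ (φ e₀) = (Sk.z ^ (j + i)) e₀ := by
        rw [← hi, hzPt χ hχ i e₀, ← hj, ← Equiv.Perm.mul_apply, ← zpow_add, add_comm i j]
      show φ (χ e₀) = χ (φ e₀)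
      rw [e1, e2, add_comm]
    have hmemprod : (χ * φ)⁻¹ * (φ * χ) ∈ ribbonAut Sk :=
      mul_mem (inv_mem (mul_mem hχ hφ)) (mul_mem hφ hχ)
    have hfix : ((χ * φ)⁻¹ * (φ * χ)) e₀ = e₀ := by
      rw [Equiv.Perm.mul_apply, key, Equiv.Perm.coe_inv, Equiv.symm_apply_apply]
    have h1 := hfree _ hmemprod e₀ hfix
    rw [inv_mul_eq_one] at h1
    exact h1.symm
  -- divisibility
  have hdvdE : Nat.card ↥(ribbonAut Sk) ∣ Nat.card Sk.E := by
    have h1 := grp_dvd (ribbonAut Sk) (fun _ => True) (fun _ _ _ _ => trivial) hfree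
    have h2 : Nat.card {e : Sk.E // True} = Nat.card Sk.E :=
      Nat.card_congr (Equiv.subtypeUnivEquiv (fun _ => trivial))
    rwa [h2] at h1
  have hdvdF : Nat.card ↥(ribbonAut Sk) ∣ Nat.card {e : Sk.E // Sk.z e = e} := by
    refine grp_dvd _ (fun e => Sk.z e = e) ?_ hfree
    intro φ hφ e he
    calc Sk.z (φ e) = φ (Sk.z e) := (hcommPt Sk.z φ (hz_comm φ hφ) e).symm
      _ = φ e := by rw [he]
  have hdvd6 : Nat.card ↥(ribbonAut Sk) ∣ 6 := by
    have h1 : Nat.card ↥(ribbonAut Sk) ∣ 6 * Nat.card {e : Sk.E // Sk.z e = e} :=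
      Dvd.dvd.mul_left hdvdF 6
    rw [hcount] at h1
    have h2 := Nat.dvd_sub h1 hdvdE
    have h3 : Nat.card Sk.E + 6 - Nat.card Sk.E = 6 := by omega
    rwa [h3] at h2
  by_contra hgt
  push_neg at hgt
  obtain ⟨c, hc⟩ := hdvd6
  have hm6 : Nat.card ↥(ribbonAut Sk) = 6 := by
    rcases Nat.lt_or_ge c 2 with hc2 | hc2
    · interval_cases c
      · omega
      · omega
    · exfalso
      have h8 : Nat.card ↥(ribbonAut Sk) * 2 ≤ Nat.card ↥(ribbonAut Sk) * c :=
        Nat.mul_le_mul_left _ hc2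
      omega
  -- Cauchy
  letI : Fintype ↥(ribbonAut Sk) := Fintype.ofFinite _
  have hcard6 : Fintype.card ↥(ribbonAut Sk) = 6 := by
    rw [← Nat.card_eq_fintype_card]; exact hm6
  haveI hfact2 : Fact (Nat.Prime 2) := ⟨Nat.prime_two⟩
  haveI hfact3 : Fact (Nat.Prime 3) := ⟨Nat.prime_three⟩
  obtain ⟨ψ', hψ'⟩ := exists_prime_orderOf_dvd_card (G := ↥(ribbonAut Sk)) 2
    (by rw [hcard6]; norm_num)
  obtain ⟨ρ', hρ'⟩ := exists_prime_orderOf_dvd_card (G := ↥(ribbonAut Sk)) 3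
    (by rw [hcard6]; norm_num)
  set ψ : Equiv.Perm Sk.E := ψ'.1 with hψdef
  set ρ : Equiv.Perm Sk.E := ρ'.1 with hρdef
  have hψmem : ψ ∈ ribbonAut Sk := ψ'.2
  have hρmem : ρ ∈ ribbonAut Sk := ρ'.2
  have hψ2 : ψ * ψ = 1 := by
    have h1 : ψ' ^ 2 = 1 := by rw [← hψ']; exact pow_orderOf_eq_one ψ'
    have h2 : ((ψ' ^ 2 : ↥(ribbonAut Sk)) : Equiv.Perm Sk.E)
        = ((1 : ↥(ribbonAut Sk)) : Equiv.Perm Sk.E) := by rw [h1]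
    rw [SubmonoidClass.coe_pow, OneMemClass.coe_one, pow_two] at h2
    exact h2
  have hρ3 : ρ * ρ * ρ = 1 := by
    have h1 : ρ' ^ 3 = 1 := by rw [← hρ']; exact pow_orderOf_eq_one ρ'
    have h2 : ((ρ' ^ 3 : ↥(ribbonAut Sk)) : Equiv.Perm Sk.E)
        = ((1 : ↥(ribbonAut Sk)) : Equiv.Perm Sk.E) := by rw [h1]
    rw [SubmonoidClass.coe_pow, OneMemClass.coe_one] at h2
    rw [pow_succ, pow_two] at h2
    exact h2
  have hψne : ψ ≠ 1 := by
    intro hcon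
    have h1 : ψ' = 1 := by
      apply Subtype.ext
      rw [OneMemClass.coe_one]
      exact hcon
    rw [h1, orderOf_one] at hψ'
    norm_num at hψ'
  have hρne : ρ ≠ 1 := by
    intro hcon
    have h1 : ρ' = 1 := by
      apply Subtype.ext
      rw [OneMemClass.coe_one]
      exact hcon
    rw [h1, orderOf_one] at hρ'
    norm_num at hρ'
  have hψψ : ∀ x, ψ (ψ x) = x := by
    intro x
    have := congrArg (fun v => v x) hψ2
    simpa using this
  have hρρ : ∀ x, ρ (ρ (ρ x)) = x := by
    intro x
    have := congrArg (fun v => v x) hρ3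
    simpa using this
  have hψfree : ∀ e, ψ e ≠ e := fun e hce => hψne (hfree ψ hψmem e hce)
  have hρfree : ∀ e, ρ e ≠ e := fun e hce => hρne (hfree ρ hρmem e hce)
  have hρ2free : ∀ e, ρ (ρ e) ≠ e := by
    intro e hce
    have hmem2 : ρ * ρ ∈ ribbonAut Sk := mul_mem hρmem hρmem
    have h1 := hfree _ hmem2 e hce
    apply hρne
    have h2 : ρ = ρ * ρ * ρ := by rw [h1, one_mul]
    rw [hρ3] at h2
    exact h2
  -- pointwise commutation with ψ
  have hcop : ∀ x, Sk.op (ψ x) = ψ (Sk.op x) :=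
    fun x => hcommPt ψ Sk.op ((hmem_comm ψ hψmem).1).symm x
  have hcnx : ∀ x, Sk.nx (ψ x) = ψ (Sk.nx x) :=
    fun x => hcommPt ψ Sk.nx ((hmem_comm ψ hψmem).2).symm x
  have hcz : ∀ x, Sk.z (ψ x) = ψ (Sk.z x) :=
    fun x => hcommPt ψ Sk.z (hz_comm ψ hψmem).symm x
  have hcρ : ∀ x, ρ (ψ x) = ψ (ρ x) :=
    fun x => hcommPt ψ ρ (habel ψ hψmem ρ hρmem) x
  -- no half turn on the big cycle
  have hnohalf : ∀ e, Sk.z e ≠ ψ e := by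
    intro e hcon
    have h1 : Sk.z e ≠ e := by
      intro h2
      exact hψfree e (by rw [← hcon, h2])
    have h2 : Sk.z (Sk.z e) = e := by
      rw [hcon, hcz, hcon, hψψ]
    have hsub : ∀ e', Sk.z e' ≠ e' → (e' = e ∨ e' = Sk.z e) := by
      intro e' hne'
      rcases hcov e' with hfx | hsc'
      · exact absurd hfx hne'
      rcases hcov e with hfx | hsc
      · exact absurd hfx h1
      obtain ⟨i, hi⟩ := hsc.symm.trans hsc'
      have hper : (Sk.z ^ (2:ℕ)) e = e := by
        rw [pow_two]
        exact h2
      obtain ⟨r, hr, hru⟩ := zpow_mod_point Sk.z e 2 (by norm_num) hper i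
      rw [hru] at hi
      have : r = 0 ∨ r = 1 := by omega
      rcases this with rfl | rfl
      · left
        simpa using hi.symm
      · right
        rw [pow_one] at hi
        exact hi.symm
    have hle2 : Nat.card {e' : Sk.E // ¬ (Sk.z e' = e')} ≤ 2 := by
      have hmap : ∀ a : {e' : Sk.E // ¬ (Sk.z e' = e')}, a.1 ∈ ({e, Sk.z e} : Set Sk.E) := by
        intro a
        rcases hsub a.1 a.2 with h3 | h3
        · exact Or.inl h3
        · exact Or.inr h3
      have hinj : Function.Injective
          (fun a : {e' : Sk.E // ¬ (Sk.z e' = e')} => (⟨a.1, hmap a⟩ : ({e, Sk.z e} : Set Sk.E))) := by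
        intro a b hab
        simp only [Subtype.mk.injEq] at hab
        exact Subtype.ext hab
      have hle := Nat.card_le_card_of_injective _ hinj
      have hcard2 : Nat.card ({e, Sk.z e} : Set Sk.E) ≤ 2 := by
        rw [Nat.card_coe_set_eq]
        have := Set.ncard_insert_le e ({Sk.z e} : Set Sk.E)
        rw [Set.ncard_singleton] at this
        omega
      have hbr : Nat.card {x // x ∈ ({e, Sk.z e} : Set Sk.E)}
          = Nat.card (({e, Sk.z e} : Set Sk.E)) := rfl
      omega
    have hsplit := card_split (fun e' : Sk.E => Sk.z e' = e')
    haveI : Nonempty Sk.E := ⟨e₀⟩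
    have hpos : 0 < Nat.card Sk.E := Nat.card_pos
    omega
  -- exclusions for nx
  have hnxψ : ∀ e, Sk.nx e ≠ ψ e := by
    intro e hcon
    have h1 : ψ (Sk.nx e) = e := by rw [hcon, hψψ]
    have h2 : ψ (Sk.nx e) = Sk.nx (Sk.nx e) := by
      calc ψ (Sk.nx e) = Sk.nx (ψ e) := (hcnx e).symm
        _ = Sk.nx (Sk.nx e) := by rw [← hcon]
    have h3 : Sk.nx (Sk.nx e) = e := by rw [← h2, h1]
    have h4 := Sk.nx_order e
    rw [h3] at h4
    exact Sk.nx_free e h4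
  have hnx2ψ : ∀ e, Sk.nx (Sk.nx e) ≠ ψ e := by
    intro e hcon
    have h1 : ψ (ψ e) = e := hψψ e
    have h2 : ψ (ψ e) = Sk.nx e := by
      calc ψ (ψ e) = ψ (Sk.nx (Sk.nx e)) := by rw [hcon]
        _ = Sk.nx (ψ (Sk.nx e)) := (hcnx (Sk.nx e)).symm
        _ = Sk.nx (Sk.nx (ψ e)) := by rw [← hcnx e]
        _ = Sk.nx (Sk.nx (Sk.nx (Sk.nx e))) := by rw [← hcon]
        _ = Sk.nx e := Sk.nx_order (Sk.nx e)
    exact Sk.nx_free e (h2.symm.trans h1)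
  -- exclusions for ρ vs ψ
  have hρψ : ∀ e, ρ e ≠ ψ e := by
    intro e hcon
    have hmem2 : ψ⁻¹ * ρ ∈ ribbonAut Sk := mul_mem (inv_mem hψmem) hρmem
    have hfx : (ψ⁻¹ * ρ) e = e := by
      rw [Equiv.Perm.mul_apply, hcon, Equiv.Perm.coe_inv, Equiv.symm_apply_apply]
    have h1 := hfree _ hmem2 e hfx
    rw [inv_mul_eq_one] at h1
    apply hρne
    have h2 : ρ * ρ = 1 := by rw [← h1]; exact hψ2
    have h3 := hρ3
    rw [h2, one_mul] at h3
    exact h3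
  have hρ2ψ : ∀ e, ρ (ρ e) ≠ ψ e := by
    intro e hcon
    have hmem2 : ψ⁻¹ * (ρ * ρ) ∈ ribbonAut Sk :=
      mul_mem (inv_mem hψmem) (mul_mem hρmem hρmem)
    have hfx : (ψ⁻¹ * (ρ * ρ)) e = e := by
      rw [Equiv.Perm.mul_apply, Equiv.Perm.mul_apply, hcon, Equiv.Perm.coe_inv, Equiv.symm_apply_apply]
    have h1 := hfree _ hmem2 e hfx
    rw [inv_mul_eq_one] at h1
    apply hρne
    have h4 : (ρ * ρ) * (ρ * ρ) = 1 := by rw [← h1]; exact hψ2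
    have h5 : (ρ * ρ) * (ρ * ρ) = (ρ * ρ * ρ) * ρ := by group
    rw [h5, hρ3, one_mul] at h4
    exact h4
  -- the quotient
  have hopρPt : ∀ a, Sk.op (ρ a) = ρ (Sk.op a) :=
    fun a => hcommPt ρ Sk.op ((hmem_comm ρ hρmem).1).symm a
  set opb := qmap ψ hψψ Sk.op hcop with hopbdef
  set nxb := qmap ψ hψψ Sk.nx hcnx with hnxbdef
  set zb := qmap ψ hψψ Sk.z hcz with hzbdef
  set ρb := qmap ψ hψψ ρ hcρ with hρbdef
  haveI hQfin : Finite (Quotient (qSetoid ψ hψψ)) := Quotient.finite _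
  letI hQfin2 : Fintype (Quotient (qSetoid ψ hψψ)) := Fintype.ofFinite _
  -- cardinalities
  have hME : Nat.card Sk.E = 2 * Nat.card (Quotient (qSetoid ψ hψψ)) := q_card ψ hψψ hψfree
  have hfeq : Nat.card {e : Sk.E // Sk.z e = e}
      = 2 * Nat.card {q : Quotient (qSetoid ψ hψψ) // zb q = q} :=
    qfix_card ψ hψψ Sk.z hcz hψfree hnohalf
  -- op-bar is an involution
  have hopb2 : opb * opb = 1 := by
    apply Equiv.ext
    intro q
    induction q using Quotient.ind with
    | _ a =>
      show opb (opb (Quotient.mk (qSetoid ψ hψψ) a)) = Quotient.mk (qSetoid ψ hψψ) a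
      rw [hopbdef, qmap_mk, qmap_mk, Sk.op_invol]
  have hinv := invol_cyc opb hopb2
  -- nx-bar has order 3 and is free
  have hnxb3 : nxb * nxb * nxb = 1 := by
    apply Equiv.ext
    intro q
    induction q using Quotient.ind with
    | _ a =>
      show nxb (nxb (nxb (Quotient.mk (qSetoid ψ hψψ) a))) = Quotient.mk (qSetoid ψ hψψ) a
      rw [hnxbdef, qmap_mk, qmap_mk, qmap_mk, Sk.nx_order]
  have hnxbf1 : ∀ q, nxb q ≠ q := by
    intro q
    induction q using Quotient.ind with
    | _ a =>
      intro hcon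
      rw [hnxbdef, qmap_mk] at hcon
      rcases (Quotient.exact hcon : (qSetoid ψ hψψ).r (Sk.nx a) a) with h1 | h1
      · exact Sk.nx_free a h1.symm
      · apply hnxψ a
        have := congrArg ψ h1
        rw [hψψ] at this
        exact this.symm
  have hnxbf2 : ∀ q, nxb (nxb q) ≠ q := by
    intro q
    induction q using Quotient.ind with
    | _ a =>
      intro hcon
      rw [hnxbdef, qmap_mk, qmap_mk] at hcon
      rcases (Quotient.exact hcon : (qSetoid ψ hψψ).r (Sk.nx (Sk.nx a)) a) with h1 | h1
      · have h2 := Sk.nx_order a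
        rw [← h1] at h2
        exact Sk.nx_free a h2
      · apply hnx2ψ a
        have := congrArg ψ h1
        rw [hψψ] at this
        exact this.symm
  have h3c := three_cyc nxb hnxb3 hnxbf1 hnxbf2
  -- z-bar cycle structure
  have hzb0 : zb (Quotient.mk (qSetoid ψ hψψ) e₀) ≠ Quotient.mk (qSetoid ψ hψψ) e₀ := by
    intro hcon
    rw [hzbdef, qmap_mk] at hcon
    rcases (Quotient.exact hcon : (qSetoid ψ hψψ).r (Sk.z e₀) e₀) with h1 | h1
    · exact hz0 h1.symm
    · apply hnohalf e₀
      have := congrArg ψ h1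
      rw [hψψ] at this
      exact this.symm
  have hzbcov : ∀ q, zb q = q ∨ zb.SameCycle (Quotient.mk (qSetoid ψ hψψ) e₀) q := by
    intro q
    induction q using Quotient.ind with
    | _ a =>
      rcases hcov a with hfx | hsc
      · left
        rw [hzbdef, qmap_mk, hfx]
      · right
        obtain ⟨i, hi⟩ := hsc
        refine ⟨i, ?_⟩
        rw [hzbdef, qmap_zpow, hi]
  have hzc := fix_plus_one_cyc zb (Quotient.mk (qSetoid ψ hψψ) e₀) hzb0 hzbcov
  -- ρ-bar is free of order 3 and preserves the fixed points of op-bar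
  have hρb3 : ρb * ρb * ρb = 1 := by
    apply Equiv.ext
    intro q
    induction q using Quotient.ind with
    | _ a =>
      show ρb (ρb (ρb (Quotient.mk (qSetoid ψ hψψ) a))) = Quotient.mk (qSetoid ψ hψψ) a
      rw [hρbdef, qmap_mk, qmap_mk, qmap_mk, hρρ]
  have hρbf1 : ∀ q, ρb q ≠ q := by
    intro q
    induction q using Quotient.ind with
    | _ a =>
      intro hcon
      rw [hρbdef, qmap_mk] at hcon
      rcases (Quotient.exact hcon : (qSetoid ψ hψψ).r (ρ a) a) with h1 | h1
      · exact hρfree a h1.symm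
      · apply hρψ a
        have := congrArg ψ h1
        rw [hψψ] at this
        exact this.symm
  have hρbf2 : ∀ q, ρb (ρb q) ≠ q := by
    intro q
    induction q using Quotient.ind with
    | _ a =>
      intro hcon
      rw [hρbdef, qmap_mk, qmap_mk] at hcon
      rcases (Quotient.exact hcon : (qSetoid ψ hψψ).r (ρ (ρ a)) a) with h1 | h1
      · exact hρ2free a h1.symm
      · apply hρ2ψ a
        have := congrArg ψ h1
        rw [hψψ] at this
        exact this.symm
  have hcomm_opbρb : ∀ q, opb (ρb q) = ρb (opb q) := by
    intro q
    induction q using Quotient.ind with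
    | _ a =>
      rw [hρbdef, hopbdef, qmap_mk, qmap_mk, qmap_mk, qmap_mk, hopρPt]
  have h3t : 3 ∣ Nat.card {q : Quotient (qSetoid ψ hψψ) // opb q = q} := by
    refine three_dvd ρb hρb3 hρbf1 hρbf2 (fun q => opb q = q) ?_
    intro q hq
    rw [hcomm_opbρb, hq]
  -- nxb * zb = opb
  have hprodb : nxb * zb = opb := by
    apply Equiv.ext
    intro q
    induction q using Quotient.ind with
    | _ a =>
      show nxb (zb (Quotient.mk (qSetoid ψ hψψ) a)) = opb (Quotient.mk (qSetoid ψ hψψ) a)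
      rw [hnxbdef, hzbdef, hopbdef, qmap_mk, qmap_mk, qmap_mk]
      congr 1
      have hza : Sk.z a = Sk.nx.symm (Sk.op a) := rfl
      rw [hza]
      exact Sk.nx.apply_symm_apply _
  -- transitivity in the quotient
  have hreach : ∀ g ∈ Subgroup.closure ({Sk.op, Sk.nx} : Set (Equiv.Perm Sk.E)), ∀ a : Sk.E,
      (orbSetoid nxb zb).r (Quotient.mk (qSetoid ψ hψψ) a)
        (Quotient.mk (qSetoid ψ hψψ) (g a)) := by
    intro g hg
    refine Subgroup.closure_induction
      (p := fun g _ => ∀ a : Sk.E, (orbSetoid nxb zb).r (Quotient.mk (qSetoid ψ hψψ) a)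
        (Quotient.mk (qSetoid ψ hψψ) (g a))) ?_ ?_ ?_ ?_ hg
    · rintro γ (rfl | rfl)
      · intro a
        refine ⟨nxb * zb, mul_mem (Subgroup.subset_closure (by simp))
          (Subgroup.subset_closure (by simp)), ?_⟩
        rw [hprodb, hopbdef, qmap_mk]
      · intro a
        refine ⟨nxb, Subgroup.subset_closure (by simp), ?_⟩
        rw [hnxbdef, qmap_mk]
    · intro a
      show (orbSetoid nxb zb).r _ (Quotient.mk (qSetoid ψ hψψ) ((1 : Equiv.Perm Sk.E) a))
      simp only [Equiv.Perm.one_apply]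
      exact (orbSetoid nxb zb).refl' _
    · intro u v _ _ pu pv a
      have h1 := pv a
      have h2 := pu (v a)
      exact (orbSetoid nxb zb).trans' h1 h2
    · intro u _ pu a
      have h1 := pu (u⁻¹ a)
      rw [Equiv.Perm.coe_inv, Equiv.apply_symm_apply] at h1
      exact (orbSetoid nxb zb).symm' h1
  have horb1 : orb nxb zb = 1 := by
    rw [orb, Nat.card_eq_one_iff_unique]
    constructor
    · constructor
      intro q q'
      induction q using Quotient.ind with
      | _ x =>
        induction q' using Quotient.ind with
        | _ x' =>
          induction x using Quotient.ind with
          | _ a =>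
            induction x' using Quotient.ind with
            | _ a' =>
              obtain ⟨g, hg, hga⟩ := Sk.connected a a'
              have h1 := hreach g hg a
              rw [hga] at h1
              exact Quotient.sound h1
    · exact ⟨Quotient.mk _ (Quotient.mk (qSetoid ψ hψψ) e₀)⟩
  -- Euler bound and conclusion
  have heuler := euler_bound nxb zb
  rw [hprodb, horb1] at heuler
  have hQcard : Fintype.card (Quotient (qSetoid ψ hψψ))
      = Nat.card (Quotient (qSetoid ψ hψψ)) := (Nat.card_eq_fintype_card).symm
  rw [hQcard] at heuler
  obtain ⟨s3, hs3⟩ := h3t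
  omega
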